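/- If m ≥ 5 and (x,y) ∈ T_m, then T^{-1}(x,y) = (x−y, x) and this point lies in T_1; i.e., T^{-1}(T_m) ⊂ T_1 for all m ≥ 5. -/

import Mathlib

open Set MeasureTheory

/-- The Farey triangle `T = {(x,y) ∈ [0,1]² : x + y > 1}`. -/
def fareyTriangle : Set (ℝ × ℝ) :=
  {p | 0 ≤ p.1 ∧ p.1 ≤ 1 ∧ 0 ≤ p.2 ∧ p.2 ≤ 1 ∧ 1 < p.1 + p.2}

/-- The transformation `T(x,y) = (y, ⌊(1+x)/y⌋·y − x)`. -/
noncomputable def fareyMap (p : ℝ × ℝ) : ℝ × ℝ :=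
  (p.2, (⌊(1 + p.1) / p.2⌋ : ℝ) * p.2 - p.1)

/-- The inverse transformation `T⁻¹(x,y) = (⌊(1+y)/x⌋·x − y, x)`. -/
noncomputable def fareyInv (p : ℝ × ℝ) : ℝ × ℝ :=
  ((⌊(1 + p.2) / p.1⌋ : ℝ) * p.1 - p.2, p.1)

/-- `κ(x,y) = ⌊(1+x)/y⌋`. -/
noncomputable def fareyKappa (p : ℝ × ℝ) : ℤ := ⌊(1 + p.1) / p.2⌋

/-- `T_k = {(x,y) ∈ T : ⌊(1+x)/y⌋ = k}`. -/
def fareySubTriangle (k : ℕ) : Set (ℝ × ℝ) :=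
  {p ∈ fareyTriangle | ⌊(1 + p.1) / p.2⌋ = (k : ℤ)}

theorem fareyInv_of_mem_high (m : ℕ) (hm : 5 ≤ m) (p : ℝ × ℝ)
    (hp : p ∈ fareySubTriangle m) :
    fareyInv p = (p.1 - p.2, p.1) ∧ fareyInv p ∈ fareySubTriangle 1 := by
  obtain ⟨⟨hx0, hx1, hy0, hy1, hsum⟩, hfl⟩ := hp
  set x := p.1
  set y := p.2
  have hy : 0 < y := by
    rcases lt_or_eq_of_le hy0 with h | h
    · exact h
    · exfalso
      rw [← h] at hfl
      simp at hfl
      omega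
  have hm5 : (5 : ℝ) ≤ ((m : ℤ) : ℝ) := by exact_mod_cast hm
  have hfloor_le : ((m : ℤ) : ℝ) ≤ (1 + x) / y := hfl ▸ Int.floor_le _
  have h5y : 5 * y ≤ 1 + x := by
    have := (le_div_iff₀ hy).mp (le_trans hm5 hfloor_le)
    linarith
  have hx : 0 < x := by linarith
  have hkey : 1 + y < 2 * x := by linarith
  have hfl1 : ⌊(1 + y) / x⌋ = (1 : ℤ) := by
    rw [Int.floor_eq_iff]
    constructor
    · rw [le_div_iff₀ hx]; push_cast; linarith
    · rw [div_lt_iff₀ hx]; push_cast; linarith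
  have heq : fareyInv p = (x - y, x) := by
    show (((⌊(1 + y) / x⌋ : ℤ) : ℝ) * x - y, x) = (x - y, x)
    simp only [fareyInv, hfl1]
    norm_num
  refine ⟨heq, ?_⟩
  rw [heq]
  refine ⟨⟨by simp; linarith, by simp; linarith, by simp; linarith,
    by simp; linarith, by simp; linarith⟩, ?_⟩
  simp only
  rw [Int.floor_eq_iff]
  constructor
  · rw [le_div_iff₀ hx]; push_cast; linarith
  · rw [div_lt_iff₀ hx]; push_cast; linarith
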